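/- (Hoffman–Wielandt inequality.) Let $A$ and $A+E$ be real symmetric $m\times m$ matrices with eigenvalues $\lambda_1(A)\ge\cdots\ge\lambda_m(A)$ and $\lambda_1(A+E)\ge\cdots\ge\lambda_m(A+E)$, listed with multiplicity in decreasing order. Then $\sum_{i=1}^m(\lambda_i(A+E)-\lambda_i(A))^2\le\|E\|_F^2$. -/

import Mathlib

open Matrix Finset

/-- Real spectral theorem, with the coercion removed. -/
private lemma real_spectral {m : ℕ} {A : Matrix (Fin m) (Fin m) ℝ} (hA : A.IsHermitian) :
    A = (hA.eigenvectorUnitary : Matrix (Fin m) (Fin m) ℝ) * diagonal hA.eigenvalues *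
      star (hA.eigenvectorUnitary : Matrix (Fin m) (Fin m) ℝ) := by
  have h := hA.spectral_theorem
  rwa [RCLike.ofReal_real_eq_id, Function.id_comp] at h

/-- For doubly stochastic `S` and antitone `f g`, `∑ᵢⱼ Sᵢⱼ fᵢ gⱼ ≤ ∑ᵢ fᵢ gᵢ`. -/
private lemma sum_ds_le {m : ℕ} (f g : Fin m → ℝ) (hf : Antitone f) (hg : Antitone g)
    (S : Matrix (Fin m) (Fin m) ℝ) (hS : S ∈ doublyStochastic ℝ (Fin m)) :
    ∑ i, ∑ j, S i j * (f i * g j) ≤ ∑ i, f i * g i := by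
  obtain ⟨w, hw0, hw1, hwS⟩ := exists_eq_sum_perm_of_mem_doublyStochastic hS
  have hSij : ∀ i j, S i j = ∑ σ : Equiv.Perm (Fin m), w σ * (if σ i = j then 1 else 0) := by
    intro i j
    rw [← hwS]
    simp [Matrix.sum_apply, Equiv.Perm.permMatrix, PEquiv.toMatrix_apply, Equiv.toPEquiv_apply,
      eq_comm]
  have h1 : ∑ i, ∑ j, S i j * (f i * g j)
      = ∑ σ : Equiv.Perm (Fin m), w σ * ∑ i, f i * g (σ i) := by
    have hstep : ∀ i, ∑ j, S i j * (f i * g j)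
        = ∑ σ : Equiv.Perm (Fin m), w σ * (f i * g (σ i)) := by
      intro i
      simp_rw [hSij, Finset.sum_mul]
      rw [Finset.sum_comm]
      refine Finset.sum_congr rfl fun σ _ => ?_
      simp [mul_ite, ite_mul, Finset.sum_ite_eq]
    simp_rw [hstep]
    rw [Finset.sum_comm]
    exact Finset.sum_congr rfl fun σ _ => (Finset.mul_sum _ _ _).symm
  rw [h1]
  calc ∑ σ : Equiv.Perm (Fin m), w σ * ∑ i, f i * g (σ i)
      ≤ ∑ σ : Equiv.Perm (Fin m), w σ * ∑ i, f i * g i := by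
        refine Finset.sum_le_sum fun σ _ => ?_
        exact mul_le_mul_of_nonneg_left ((hf.monovary hg).sum_mul_comp_perm_le_sum_mul) (hw0 σ)
    _ = ∑ i, f i * g i := by rw [← Finset.sum_mul, hw1, one_mul]

/-- The trace of a product of two real symmetric matrices is a doubly-stochastic
pairing of their eigenvalues. -/
private lemma trace_mul_eq_ds {m : ℕ} {A B : Matrix (Fin m) (Fin m) ℝ}
    (hA : A.IsHermitian) (hB : B.IsHermitian) :
    ∃ S ∈ doublyStochastic ℝ (Fin m),
      trace (A * B) = ∑ i, ∑ j, S i j * (hA.eigenvalues i * hB.eigenvalues j) := by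
  set U : Matrix (Fin m) (Fin m) ℝ := (hA.eigenvectorUnitary : Matrix (Fin m) (Fin m) ℝ) with hU
  set V : Matrix (Fin m) (Fin m) ℝ := (hB.eigenvectorUnitary : Matrix (Fin m) (Fin m) ℝ) with hV
  have hU1 : star U * U = 1 := Matrix.mem_unitaryGroup_iff'.mp hA.eigenvectorUnitary.2
  have hU2 : U * star U = 1 := Matrix.mem_unitaryGroup_iff.mp hA.eigenvectorUnitary.2
  have hV1 : star V * V = 1 := Matrix.mem_unitaryGroup_iff'.mp hB.eigenvectorUnitary.2
  have hV2 : V * star V = 1 := Matrix.mem_unitaryGroup_iff.mp hB.eigenvectorUnitary.2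
  set W : Matrix (Fin m) (Fin m) ℝ := star U * V with hW
  have hsW : star W = star V * U := by rw [hW, StarMul.star_mul, star_star]
  have hW2 : W * star W = 1 := by
    rw [hW, hsW, mul_assoc, ← mul_assoc V, hV2, one_mul, hU1]
  have hW1 : star W * W = 1 := by
    rw [hW, hsW, mul_assoc, ← mul_assoc U, hU2, one_mul, hV1]
  refine ⟨fun i j => (W i j) ^ 2, ?_, ?_⟩
  · refine mem_doublyStochastic_iff_sum.mpr ?_
    refine ⟨fun i j => sq_nonneg _, fun i => ?_, fun j => ?_⟩
    · have h := congr_fun (congr_fun hW2 i) i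
      simpa [Matrix.mul_apply, Matrix.star_apply, Matrix.one_apply, sq] using h
    · have h := congr_fun (congr_fun hW1 j) j
      simpa [Matrix.mul_apply, Matrix.star_apply, Matrix.one_apply, sq] using h
  · have e1 : trace (A * B) = trace (diagonal hA.eigenvalues *
        (star U * (V * (diagonal hB.eigenvalues * (star V * U))))) := by
      conv_lhs => rw [real_spectral hA, real_spectral hB]
      rw [show (U * diagonal hA.eigenvalues * star U) * (V * diagonal hB.eigenvalues * star V)
          = U * (diagonal hA.eigenvalues * (star U * (V * (diagonal hB.eigenvalues * star V))))
          from by simp only [Matrix.mul_assoc], Matrix.trace_mul_comm]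
      simp only [Matrix.mul_assoc]
    have e2 : diagonal hA.eigenvalues *
        (star U * (V * (diagonal hB.eigenvalues * (star V * U))))
        = diagonal hA.eigenvalues * (W * (diagonal hB.eigenvalues * star W)) := by
      rw [hW, hsW]; simp only [Matrix.mul_assoc]
    rw [e1, e2, Matrix.trace]
    refine Finset.sum_congr rfl fun i _ => ?_
    simp only [Matrix.diag_apply, Matrix.diagonal_mul, Matrix.mul_apply,
      Matrix.diagonal_apply, Matrix.star_apply, star_trivial, ite_mul, zero_mul,
      Finset.sum_ite_eq, Finset.mem_univ, if_true]
    rw [Finset.mul_sum]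
    refine Finset.sum_congr rfl fun j _ => ?_
    ring

/-- Hoffman–Wielandt inequality: if `μA` and `μAE` list the eigenvalues (with
multiplicity) of the real symmetric matrices `A` and `A + E` in decreasing order,
then `∑ i (μAE i - μA i)² ≤ ‖E‖_F²`. -/
theorem stmt_9 (m : ℕ) (A E : Matrix (Fin m) (Fin m) ℝ)
    (hA : A.IsHermitian) (hAE : (A + E).IsHermitian)
    (μA μAE : Fin m → ℝ) (hμA : Antitone μA) (hμAE : Antitone μAE)
    (gA gAE : Equiv.Perm (Fin m))
    (hA2 : μA = hA.eigenvalues ∘ gA) (hAE2 : μAE = hAE.eigenvalues ∘ gAE) :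
    ∑ i, (μAE i - μA i) ^ 2 ≤ ∑ i, ∑ j, E i j ^ 2 := by
  obtain ⟨S, hSmem, hStr⟩ := trace_mul_eq_ds hAE hA
  set S' : Matrix (Fin m) (Fin m) ℝ := fun i j => S (gAE i) (gA j) with hS'
  have hS'mem : S' ∈ doublyStochastic ℝ (Fin m) := by
    rw [mem_doublyStochastic_iff_sum] at hSmem ⊢
    obtain ⟨h0, hrow, hcol⟩ := hSmem
    refine ⟨fun i j => h0 _ _, fun i => ?_, fun j => ?_⟩
    · rw [← hrow (gAE i)]; exact Equiv.sum_comp gA (fun j => S (gAE i) j)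
    · rw [← hcol (gA j)]; exact Equiv.sum_comp gAE (fun i => S i (gA j))
  have htr0 : trace ((A + E) * A) = ∑ i, ∑ j, S' i j * (μAE i * μA j) := by
    rw [hStr, hA2, hAE2]
    rw [← Equiv.sum_comp gAE (fun i => ∑ j, S i j * (hAE.eigenvalues i * hA.eigenvalues j))]
    refine Finset.sum_congr rfl fun i _ => ?_
    rw [← Equiv.sum_comp gA (fun j => S (gAE i) j * (hAE.eigenvalues (gAE i) * hA.eigenvalues j))]
    rfl
  have htr : trace ((A + E) * A) ≤ ∑ i, μAE i * μA i := by
    rw [htr0]; exact sum_ds_le μAE μA hμAE hμA S' hS'mem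
  have trace_sq : ∀ (B : Matrix (Fin m) (Fin m) ℝ) (hB : B.IsHermitian),
      trace (B * B) = ∑ i, hB.eigenvalues i ^ 2 := by
    intro B hB
    set U : Matrix (Fin m) (Fin m) ℝ := (hB.eigenvectorUnitary : Matrix (Fin m) (Fin m) ℝ)
    have hU1 : star U * U = 1 := Matrix.mem_unitaryGroup_iff'.mp hB.eigenvectorUnitary.2
    have e : B * B = U * (diagonal hB.eigenvalues * (diagonal hB.eigenvalues * star U)) := by
      conv_lhs => rw [real_spectral hB]
      calc (U * diagonal hB.eigenvalues * star U) * (U * diagonal hB.eigenvalues * star U)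
          = U * (diagonal hB.eigenvalues * ((star U * U) * (diagonal hB.eigenvalues * star U)))
            := by simp only [Matrix.mul_assoc]
        _ = _ := by rw [hU1, one_mul]
    rw [e, Matrix.trace_mul_comm]
    rw [show (diagonal hB.eigenvalues * (diagonal hB.eigenvalues * star U)) * U
        = diagonal hB.eigenvalues * diagonal hB.eigenvalues * (star U * U) from by
          simp only [Matrix.mul_assoc], hU1, mul_one, diagonal_mul_diagonal, trace_diagonal]
    exact Finset.sum_congr rfl fun i _ => (sq _).symm
  have hTA : trace (A * A) = ∑ i, μA i ^ 2 := by
    rw [trace_sq A hA, hA2, ← Equiv.sum_comp gA (fun i => hA.eigenvalues i ^ 2)]; rfl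
  have hTB : trace ((A + E) * (A + E)) = ∑ i, μAE i ^ 2 := by
    rw [trace_sq (A + E) hAE, hAE2, ← Equiv.sum_comp gAE (fun i => hAE.eigenvalues i ^ 2)]; rfl
  have hEH : E.IsHermitian := by
    have := hAE.sub hA
    simpa using this
  have hEsym : ∀ i j, E j i = E i j := fun i j => by
    conv_lhs => rw [← hEH]
    simp [Matrix.conjTranspose_apply]
  have hFro : ∑ i, ∑ j, E i j ^ 2 = trace (E * E) := by
    rw [Matrix.trace]
    refine Finset.sum_congr rfl fun i _ => ?_
    simp only [Matrix.diag_apply, Matrix.mul_apply]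
    exact Finset.sum_congr rfl fun j _ => by rw [hEsym i j, sq]
  have hEexp : trace (E * E) = trace ((A + E) * (A + E)) + trace (A * A)
      - 2 * trace ((A + E) * A) := by
    have h : (A + E) * (A + E) = A * A + A * E + E * A + E * E := by noncomm_ring
    have h2 := congrArg trace h
    rw [trace_add, trace_add, trace_add] at h2
    have hc : trace ((A + E) * A) = trace (A * A) + trace (E * A) := by
      rw [add_mul, trace_add]
    have hc2 : trace (A * E) = trace (E * A) := trace_mul_comm A E
    linarith
  have hLexp : ∑ i, (μAE i - μA i) ^ 2
      = ∑ i, μAE i ^ 2 + ∑ i, μA i ^ 2 - 2 * ∑ i, μAE i * μA i := by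
    rw [← Finset.sum_add_distrib, Finset.mul_sum, ← Finset.sum_sub_distrib]
    exact Finset.sum_congr rfl fun i _ => by ring
  rw [hLexp, hFro, hEexp, hTA, hTB]
  linarith
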